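/- arXiv:1111.0537 — 2 statements merged into one kernel-verified Lean document; each statement's English description precedes it below -/
import Mathlib

section
/- Lemma (truncation approximation, finite sums). Let X_1, …, X_n be independent real random variables, let x > 0, and let 0 < η < 1 and ε > 0 satisfy 1 − η > ε. Then |P(S_n ≥ x) − P(S_n^{(εx)} ≥ x) − Σ_{j=1}^n P(X_j ≥ (1−η)x)| ≤ 4 (Σ_{j=1}^n P(X_j ≥ εx))² + 3 Σ_{j=1}^n P(X_j ≥ εx) · P(|S_n(j)| > ηx) + Σ_{j=1}^n P((1−η)x ≤ X_j < (1+η)x). -/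
open MeasureTheory ProbabilityTheory Filter Finset


lemma trunc_aux {Ω : Type*} [MeasurableSpace Ω] (P : Measure Ω) [IsProbabilityMeasure P]
    (n : ℕ) (A B : Set Ω) (C D G R : Fin n → Set Ω)
    (mA : MeasurableSet A) (mC : ∀ j, MeasurableSet (C j))
    (hAB : ∀ ω, (∀ k, ω ∉ C k) → (ω ∈ A ↔ ω ∈ B))
    (hBC : ∀ j, B ∩ C j ⊆ R j)
    (hAE : ∀ j, ∀ ω ∈ A ∩ C j, ω ∈ D j ∪ R j)
    (hDC : ∀ j, D j ⊆ C j)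
    (hDA : ∀ j, ∀ ω ∈ D j, ω ∉ A → ω ∈ G j ∪ R j)
    (hCC : ∀ j k, j ≠ k → P (C j ∩ C k) = P (C j) * P (C k))
    (hCR : ∀ j, P (C j ∩ R j) = P (C j) * P (R j)) :
    |(P A).toReal - (P B).toReal - ∑ j, (P (D j)).toReal|
      ≤ 4 * (∑ j, (P (C j)).toReal) ^ 2
        + 3 * ∑ j, (P (C j)).toReal * (P (R j)).toReal
        + ∑ j, (P (G j)).toReal := by
  classical
  set E : Fin n → Set Ω := fun j => C j ∩ ⋂ k ∈ univ.erase j, (C k)ᶜ with hE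
  have mE : ∀ j, MeasurableSet (E j) := fun j =>
    (mC j).inter (MeasurableSet.biInter (Set.to_countable _) fun k _ => (mC k).compl)
  set N0 : Set Ω := ⋂ k, (C k)ᶜ with hN0
  -- basic real helpers
  have hnn : ∀ s : Set Ω, (0:ℝ) ≤ (P s).toReal := fun s => ENNReal.toReal_nonneg
  have hmono : ∀ {s t : Set Ω}, s ⊆ t → (P s).toReal ≤ (P t).toReal := fun h =>
    ENNReal.toReal_mono (measure_ne_top P _) (measure_mono h)
  have hun2 : ∀ {s t u : Set Ω}, s ⊆ t ∪ u → (P s).toReal ≤ (P t).toReal + (P u).toReal := by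
    intro s t u h
    have h1 : P s ≤ P t + P u := (measure_mono h).trans (measure_union_le t u)
    have h2 := ENNReal.toReal_mono (by finiteness) h1
    rwa [ENNReal.toReal_add (measure_ne_top P t) (measure_ne_top P u)] at h2
  have hbun : ∀ (s : Finset (Fin n)) (f : Fin n → Set Ω),
      (P (⋃ j ∈ s, f j)).toReal ≤ ∑ j ∈ s, (P (f j)).toReal := by
    intro s f
    have h1 : P (⋃ j ∈ s, f j) ≤ ∑ j ∈ s, P (f j) := measure_biUnion_finset_le s f
    have h2 := ENNReal.toReal_mono (ENNReal.sum_ne_top.2 fun a _ => measure_ne_top P _) h1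
    rwa [ENNReal.toReal_sum (fun a _ => measure_ne_top P _)] at h2
  -- products
  have pCC : ∀ j, ∀ k ∈ univ.erase j, (P (C j ∩ C k)).toReal
      = (P (C j)).toReal * (P (C k)).toReal := by
    intro j k hk
    rw [hCC j k (mem_erase.1 hk).1.symm, ENNReal.toReal_mul]
  have pCR : ∀ j, (P (C j ∩ R j)).toReal = (P (C j)).toReal * (P (R j)).toReal := by
    intro j; rw [hCR j, ENNReal.toReal_mul]
  -- f1 : disjointness lower bound
  have f1 : (P (A ∩ N0)).toReal + ∑ j, (P (A ∩ E j)).toReal ≤ (P A).toReal := by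
    have hpd : Set.PairwiseDisjoint (↑(univ : Finset (Fin n))) (fun j => A ∩ E j) := by
      intro j _ k _ hjk
      refine Set.disjoint_left.2 fun ω hωj hωk => ?_
      have h1 : ω ∉ C k := by
        have := hωj.2.2
        simp only [Set.mem_iInter] at this
        exact this k (mem_erase.2 ⟨hjk.symm, mem_univ k⟩)
      exact h1 hωk.2.1
    have hU : P (⋃ j ∈ (univ : Finset (Fin n)), A ∩ E j) = ∑ j, P (A ∩ E j) :=
      measure_biUnion_finset hpd (fun j _ => mA.inter (mE j))
    have hd : Disjoint (A ∩ N0) (⋃ j ∈ (univ : Finset (Fin n)), A ∩ E j) := by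
      refine Set.disjoint_left.2 fun ω hω hω2 => ?_
      simp only [Set.mem_iUnion] at hω2
      obtain ⟨j, _, hj⟩ := hω2
      have : ω ∉ C j := by
        have := hω.2; simp only [hN0, Set.mem_iInter] at this; exact this j
      exact this hj.2.1
    have hm2 : MeasurableSet (⋃ j ∈ (univ : Finset (Fin n)), A ∩ E j) :=
      MeasurableSet.biUnion (Set.to_countable _) fun j _ => mA.inter (mE j)
    have heq : P (A ∩ N0) + P (⋃ j ∈ (univ : Finset (Fin n)), A ∩ E j)
        = P ((A ∩ N0) ∪ ⋃ j ∈ (univ : Finset (Fin n)), A ∩ E j) :=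
      (measure_union hd hm2).symm
    have hsub : ((A ∩ N0) ∪ ⋃ j ∈ (univ : Finset (Fin n)), A ∩ E j) ⊆ A := by
      intro ω hω
      rcases hω with h | h
      · exact h.1
      · simp only [Set.mem_iUnion] at h; exact h.choose_spec.choose_spec.1
    calc (P (A ∩ N0)).toReal + ∑ j, (P (A ∩ E j)).toReal
        = (P (A ∩ N0) + P (⋃ j ∈ (univ : Finset (Fin n)), A ∩ E j)).toReal := by
          rw [ENNReal.toReal_add (measure_ne_top P _) (measure_ne_top P _), hU,
            ENNReal.toReal_sum (fun a _ => measure_ne_top P _)]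
      _ = (P ((A ∩ N0) ∪ ⋃ j ∈ (univ : Finset (Fin n)), A ∩ E j)).toReal := by rw [heq]
      _ ≤ (P A).toReal := hmono hsub
  -- f2 : cover upper bound
  have f2 : (P A).toReal ≤ (P (A ∩ N0)).toReal + ∑ j, (P (A ∩ E j)).toReal
      + ∑ j, ∑ k ∈ univ.erase j, (P (C j)).toReal * (P (C k)).toReal := by
    have hcov : A ⊆ (A ∩ N0) ∪ ((⋃ j ∈ (univ : Finset (Fin n)), A ∩ E j)
        ∪ (⋃ j ∈ (univ : Finset (Fin n)), ⋃ k ∈ univ.erase j, C j ∩ C k)) := by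
      intro ω hω
      by_cases h0 : ∀ k, ω ∉ C k
      · exact Or.inl ⟨hω, by simp only [hN0, Set.mem_iInter]; exact h0⟩
      · push_neg at h0
        obtain ⟨j, hj⟩ := h0
        by_cases h1 : ∃ k ∈ univ.erase j, ω ∈ C k
        · obtain ⟨k, hk, hck⟩ := h1
          refine Or.inr (Or.inr ?_)
          simp only [Set.mem_iUnion]
          exact ⟨j, mem_univ j, k, hk, hj, hck⟩
        · push_neg at h1
          refine Or.inr (Or.inl ?_)
          simp only [Set.mem_iUnion]
          exact ⟨j, mem_univ j, hω, hj, by simp only [Set.mem_iInter]; exact h1⟩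
    have step1 := hun2 hcov
    have step2 := hun2 (Set.Subset.refl ((⋃ j ∈ (univ : Finset (Fin n)), A ∩ E j)
        ∪ (⋃ j ∈ (univ : Finset (Fin n)), ⋃ k ∈ univ.erase j, C j ∩ C k)))
    have step3 := hbun univ (fun j => A ∩ E j)
    have step4 : (P (⋃ j ∈ (univ : Finset (Fin n)), ⋃ k ∈ univ.erase j, C j ∩ C k)).toReal
        ≤ ∑ j, ∑ k ∈ univ.erase j, (P (C j)).toReal * (P (C k)).toReal := by
      refine (hbun univ _).trans (Finset.sum_le_sum fun j _ => ?_)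
      refine (hbun (univ.erase j) _).trans (Finset.sum_le_sum fun k hk => ?_)
      rw [pCC j k hk]
    linarith
  -- f3
  have hABset : A ∩ N0 = B ∩ N0 := by
    ext ω
    constructor
    · rintro ⟨h1, h2⟩
      simp only [hN0, Set.mem_iInter] at h2
      exact ⟨(hAB ω h2).1 h1, by simp only [hN0, Set.mem_iInter]; exact h2⟩
    · rintro ⟨h1, h2⟩
      simp only [hN0, Set.mem_iInter] at h2
      exact ⟨(hAB ω h2).2 h1, by simp only [hN0, Set.mem_iInter]; exact h2⟩
  have f3a : (P (A ∩ N0)).toReal ≤ (P B).toReal := by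
    rw [hABset]; exact hmono Set.inter_subset_left
  have f3b : (P B).toReal ≤ (P (A ∩ N0)).toReal
      + ∑ j, (P (C j)).toReal * (P (R j)).toReal := by
    have hcov : B ⊆ (B ∩ N0) ∪ ⋃ j ∈ (univ : Finset (Fin n)), C j ∩ R j := by
      intro ω hω
      by_cases h0 : ∀ k, ω ∉ C k
      · exact Or.inl ⟨hω, by simp only [hN0, Set.mem_iInter]; exact h0⟩
      · push_neg at h0
        obtain ⟨j, hj⟩ := h0
        refine Or.inr ?_
        simp only [Set.mem_iUnion]
        exact ⟨j, mem_univ j, hj, hBC j ⟨hω, hj⟩⟩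
    have step1 := hun2 hcov
    have step2 := hbun univ (fun j => C j ∩ R j)
    rw [← hABset] at step1
    have step3 : ∑ j, (P (C j ∩ R j)).toReal = ∑ j, (P (C j)).toReal * (P (R j)).toReal :=
      Finset.sum_congr rfl fun j _ => pCR j
    linarith
  -- f4
  have f4 : ∑ j, (P (A ∩ E j)).toReal
      ≤ ∑ j, (P (D j)).toReal + ∑ j, (P (C j)).toReal * (P (R j)).toReal := by
    rw [← Finset.sum_add_distrib]
    refine Finset.sum_le_sum fun j _ => ?_
    have hsub : A ∩ E j ⊆ D j ∪ (C j ∩ R j) := by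
      rintro ω ⟨hωA, hωE⟩
      rcases hAE j ω ⟨hωA, hωE.1⟩ with h | h
      · exact Or.inl h
      · exact Or.inr ⟨hωE.1, h⟩
    have := hun2 hsub
    rw [pCR j] at this
    linarith
  -- f5
  have f5 : ∑ j, (P (D j)).toReal ≤ ∑ j, (P (A ∩ E j)).toReal + ∑ j, (P (G j)).toReal
      + ∑ j, (P (C j)).toReal * (P (R j)).toReal
      + ∑ j, ∑ k ∈ univ.erase j, (P (C j)).toReal * (P (C k)).toReal := by
    have key : ∀ j, (P (D j)).toReal ≤ (P (A ∩ E j)).toReal + ((P (G j)).toReal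
        + ((P (C j)).toReal * (P (R j)).toReal
          + ∑ k ∈ univ.erase j, (P (C j)).toReal * (P (C k)).toReal)) := by
      intro j
      have hsub : D j ⊆ (A ∩ E j) ∪ (G j ∪ ((C j ∩ R j)
          ∪ ⋃ k ∈ univ.erase j, C j ∩ C k)) := by
        intro ω hω
        have hωC : ω ∈ C j := hDC j hω
        by_cases hk : ∃ k ∈ univ.erase j, ω ∈ C k
        · obtain ⟨k, hk1, hk2⟩ := hk
          refine Or.inr (Or.inr (Or.inr ?_))
          simp only [Set.mem_iUnion]
          exact ⟨k, hk1, hωC, hk2⟩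
        · push_neg at hk
          by_cases hA : ω ∈ A
          · exact Or.inl ⟨hA, hωC, by simp only [Set.mem_iInter]; exact hk⟩
          · rcases hDA j ω hω hA with h | h
            · exact Or.inr (Or.inl h)
            · exact Or.inr (Or.inr (Or.inl ⟨hωC, h⟩))
      have h1 := hun2 hsub
      have h2 := hun2 (Set.Subset.refl (G j ∪ ((C j ∩ R j) ∪ ⋃ k ∈ univ.erase j, C j ∩ C k)))
      have h3 := hun2 (Set.Subset.refl ((C j ∩ R j) ∪ ⋃ k ∈ univ.erase j, C j ∩ C k))
      have h4 : (P (⋃ k ∈ univ.erase j, C j ∩ C k)).toReal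
          ≤ ∑ k ∈ univ.erase j, (P (C j)).toReal * (P (C k)).toReal := by
        refine (hbun (univ.erase j) _).trans (Finset.sum_le_sum fun k hk => ?_)
        rw [pCC j k hk]
      have h5 := pCR j
      linarith
    calc ∑ j, (P (D j)).toReal
        ≤ ∑ j, ((P (A ∩ E j)).toReal + ((P (G j)).toReal
          + ((P (C j)).toReal * (P (R j)).toReal
            + ∑ k ∈ univ.erase j, (P (C j)).toReal * (P (C k)).toReal))) :=
          Finset.sum_le_sum fun j _ => key j
      _ = _ := by rw [Finset.sum_add_distrib, Finset.sum_add_distrib,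
          Finset.sum_add_distrib]; ring
  -- f6
  have f6 : ∑ j, ∑ k ∈ univ.erase j, (P (C j)).toReal * (P (C k)).toReal
      ≤ (∑ j, (P (C j)).toReal) ^ 2 := by
    have : ∀ j, ∑ k ∈ univ.erase j, (P (C j)).toReal * (P (C k)).toReal
        ≤ (P (C j)).toReal * ∑ k, (P (C k)).toReal := by
      intro j
      rw [← Finset.mul_sum]
      exact mul_le_mul_of_nonneg_left
        (Finset.sum_le_sum_of_subset_of_nonneg (Finset.erase_subset j univ)
          fun k _ _ => hnn (C k)) (hnn (C j))
    calc ∑ j, ∑ k ∈ univ.erase j, (P (C j)).toReal * (P (C k)).toReal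
        ≤ ∑ j, (P (C j)).toReal * ∑ k, (P (C k)).toReal := Finset.sum_le_sum fun j _ => this j
      _ = (∑ j, (P (C j)).toReal) ^ 2 := by rw [← Finset.sum_mul, sq]
  -- nonnegativity
  have nn1 : (0:ℝ) ≤ (∑ j, (P (C j)).toReal) ^ 2 := sq_nonneg _
  have nn2 : (0:ℝ) ≤ ∑ j, (P (C j)).toReal * (P (R j)).toReal :=
    Finset.sum_nonneg fun j _ => mul_nonneg (hnn _) (hnn _)
  have nn3 : (0:ℝ) ≤ ∑ j, (P (G j)).toReal := Finset.sum_nonneg fun j _ => hnn _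
  rw [abs_le]
  constructor <;> linarith

/-- **Lemma (truncation approximation, finite sums).**
For independent random variables `X 1, …, X n`, `x > 0`, `0 < η < 1`, `ε > 0` with
`1 - η > ε`, the probability `P(S n ≥ x)` is approximated by
`P(S n^{(εx)} ≥ x) + Σ_j P(X j ≥ (1-η)x)` with the stated error bound. -/
theorem truncation_approximation_finite
    {Ω : Type*} [MeasurableSpace Ω] (P : Measure Ω) [IsProbabilityMeasure P]
    (n : ℕ) (X : Fin n → Ω → ℝ)
    (hmeas : ∀ i, Measurable (X i))
    (hindep : iIndepFun X P)
    (x η ε : ℝ) (hx : 0 < x)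
    (hη0 : 0 < η) (hη1 : η < 1) (hε : 0 < ε) (hηε : ε < 1 - η) :
    |(P {ω | x ≤ ∑ i, X i ω}).toReal
      - (P {ω | x ≤ ∑ i, (if X i ω < ε * x then X i ω else 0)}).toReal
      - ∑ j, (P {ω | (1 - η) * x ≤ X j ω}).toReal|
    ≤ 4 * (∑ j, (P {ω | ε * x ≤ X j ω}).toReal) ^ 2
      + 3 * ∑ j, (P {ω | ε * x ≤ X j ω}).toReal
          * (P {ω | η * x < |∑ i ∈ Finset.univ.erase j, X i ω|}).toReal
      + ∑ j, (P {ω | (1 - η) * x ≤ X j ω ∧ X j ω < (1 + η) * x}).toReal := by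
  classical
  have hεx : 0 < ε * x := mul_pos hε hx
  have hsum : ∀ j ω, ∑ i, X i ω = X j ω + ∑ i ∈ univ.erase j, X i ω :=
    fun j ω => (Finset.add_sum_erase univ (fun i => X i ω) (mem_univ j)).symm
  refine trunc_aux P n
    {ω | x ≤ ∑ i, X i ω}
    {ω | x ≤ ∑ i, (if X i ω < ε * x then X i ω else 0)}
    (fun j => {ω | ε * x ≤ X j ω})
    (fun j => {ω | (1 - η) * x ≤ X j ω})
    (fun j => {ω | (1 - η) * x ≤ X j ω ∧ X j ω < (1 + η) * x})
    (fun j => {ω | η * x < |∑ i ∈ Finset.univ.erase j, X i ω|})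
    ?_ ?_ ?_ ?_ ?_ ?_ ?_ ?_ ?_
  · exact measurableSet_le measurable_const (Finset.measurable_sum univ fun i _ => hmeas i)
  · exact fun j => measurableSet_le measurable_const (hmeas j)
  · -- A = B on N0
    intro ω h
    have heq : ∀ i, (if X i ω < ε * x then X i ω else 0) = X i ω := by
      intro i
      have := h i
      simp only [Set.mem_setOf_eq, not_le] at this
      exact if_pos this
    simp only [Set.mem_setOf_eq, heq]
  · -- B ∩ C j ⊆ R j
    rintro j ω ⟨hB, hC⟩
    simp only [Set.mem_setOf_eq] at hB hC ⊢
    set t : Fin n → ℝ := fun i => if X i ω < ε * x then X i ω else 0 with ht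
    have htj : t j = 0 := if_neg (not_lt.mpr hC)
    have hsplit : ∑ i, t i = t j + ∑ i ∈ univ.erase j, t i :=
      (Finset.add_sum_erase univ t (mem_univ j)).symm
    have hle : ∑ i ∈ univ.erase j, t i ≤ ∑ i ∈ univ.erase j, X i ω := by
      refine Finset.sum_le_sum fun i _ => ?_
      by_cases h : X i ω < ε * x
      · simp [ht, h]
      · simp only [ht, if_neg h]
        exact le_trans hεx.le (not_lt.1 h)
    have h1 : x ≤ ∑ i ∈ univ.erase j, X i ω := by
      rw [hsplit, htj, zero_add] at hB; linarith
    have h2 : η * x < x := by nlinarith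
    exact lt_of_lt_of_le (lt_of_lt_of_le h2 h1) (le_abs_self _)
  · -- A ∩ C j ⊆ D j ∪ R j
    rintro j ω ⟨hA, _⟩
    simp only [Set.mem_setOf_eq] at hA
    by_cases hD : (1 - η) * x ≤ X j ω
    · exact Or.inl hD
    · refine Or.inr ?_
      simp only [Set.mem_setOf_eq, not_le] at hD ⊢
      have := hsum j ω
      have h1 : η * x < ∑ i ∈ univ.erase j, X i ω := by nlinarith
      exact lt_of_lt_of_le h1 (le_abs_self _)
  · -- D j ⊆ C j
    intro j ω hω
    simp only [Set.mem_setOf_eq] at hω ⊢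
    nlinarith
  · -- D j ∩ Aᶜ ⊆ G j ∪ R j
    intro j ω hD hA
    simp only [Set.mem_setOf_eq, not_le] at hD hA
    by_cases h : X j ω < (1 + η) * x
    · exact Or.inl ⟨hD, h⟩
    · refine Or.inr ?_
      simp only [Set.mem_setOf_eq, not_lt] at h ⊢
      have := hsum j ω
      have h1 : ∑ i ∈ univ.erase j, X i ω < -(η * x) := by nlinarith
      have h2 : η * x < -(∑ i ∈ univ.erase j, X i ω) := by linarith
      exact lt_of_lt_of_le h2 (neg_le_abs _)
  · -- independence products C j, C k
    intro j k hjk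
    have h := (hindep.indepFun hjk).measure_inter_preimage_eq_mul
      (Set.Ici (ε * x)) (Set.Ici (ε * x)) measurableSet_Ici measurableSet_Ici
    exact h
  · -- independence product C j, R j
    intro j
    have hind : IndepFun (X j) (∑ i ∈ univ.erase j, X i) P :=
      (hindep.indepFun_finsetSum_of_notMem hmeas (Finset.notMem_erase j univ)).symm
    have hms : MeasurableSet {y : ℝ | η * x < |y|} :=
      measurableSet_lt measurable_const measurable_abs
    have h := hind.measure_inter_preimage_eq_mul (Set.Ici (ε * x)) {y : ℝ | η * x < |y|}
      measurableSet_Ici hms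
    have heq : ((∑ i ∈ univ.erase j, X i) ⁻¹' {y : ℝ | η * x < |y|})
        = {ω | η * x < |∑ i ∈ Finset.univ.erase j, X i ω|} := by
      ext ω; simp [Finset.sum_apply]
    rw [heq] at h
    exact h
end

section
/- Lemma (truncation approximation, infinite sums). Let 1 − η > ε > 0 and x > 0, and let X_1, X_2, … be independent real random variables such that S = Σ_{i=1}^∞ X_i converges almost surely. Then S^{(εx)} = Σ_{i=1}^∞ X_i^{(εx)} converges almost surely, and |P(S ≥ x) − P(S^{(εx)} ≥ x) − Σ_{j=1}^∞ P(X_j ≥ (1−η)x)| ≤ 4 (Σ_{j=1}^∞ P(X_j ≥ εx))² + 3 Σ_{j=1}^∞ P(X_j ≥ εx) · P(|S(j)| > ηx) + Σ_{j=1}^∞ P((1−η)x ≤ X_j < (1+η)x). -/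
open MeasureTheory ProbabilityTheory Filter Finset
open scoped ENNReal


lemma measurableSet_summable' {α : Type*} [m : MeasurableSpace α] (f : ℕ → α → ℝ)
    (hf : ∀ i, Measurable (f i)) : MeasurableSet {a | Summable fun i => f i a} := by
  classical
  have heq : {a | Summable fun i => f i a} =
      ⋂ (k : ℕ), ⋃ (s : Finset ℕ), ⋂ (t : Finset ℕ),
        {a | Disjoint t s → |∑ i ∈ t, f i a| < ((k : ℝ) + 1)⁻¹} := by
    ext a
    simp only [Set.mem_setOf_eq, Set.mem_iInter, Set.mem_iUnion]
    constructor
    · intro h k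
      rcases summable_iff_vanishing_norm.1 h (((k : ℝ) + 1)⁻¹) (by positivity) with ⟨s, hs⟩
      exact ⟨s, fun t ht => by simpa [Real.norm_eq_abs] using hs t ht⟩
    · intro h
      rw [summable_iff_vanishing_norm]
      intro ε hε
      obtain ⟨k, hk⟩ := exists_nat_gt ε⁻¹
      obtain ⟨s, hs⟩ := h k
      refine ⟨s, fun t ht => ?_⟩
      have h1 : ((k : ℝ) + 1)⁻¹ < ε := by
        rw [inv_lt_comm₀ (by positivity) hε]
        exact hk.trans (lt_add_one _)
      simpa [Real.norm_eq_abs] using (hs t ht).trans h1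
  rw [heq]
  refine MeasurableSet.iInter fun k => MeasurableSet.iUnion fun s =>
    MeasurableSet.iInter fun t => ?_
  by_cases h : Disjoint t s
  · simp only [h, forall_true_left]
    exact measurableSet_lt ((Finset.measurable_sum t fun i _ => hf i).abs) measurable_const
  · simp [h]

lemma measurable_tsum_real {α : Type*} [m : MeasurableSpace α] (f : ℕ → α → ℝ)
    (hf : ∀ i, Measurable (f i)) : Measurable (fun a => ∑' i, f i a) := by
  classical
  set Sm := {a | Summable fun i => f i a} with hSmdef
  have hSm : MeasurableSet Sm := measurableSet_summable' f hf
  refine measurable_of_tendsto_metrizable'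
    (f := fun n a => Sm.indicator (fun a => ∑ i ∈ Finset.range n, f i a) a) atTop
    (fun n => ((Finset.measurable_sum _ fun i _ => hf i)).indicator hSm) ?_
  rw [tendsto_pi_nhds]
  intro a
  by_cases ha : a ∈ Sm
  · have := (ha : Summable fun i => f i a).hasSum.tendsto_sum_nat
    simpa [Set.indicator_of_mem ha] using this
  · have : ∑' i, f i a = 0 := tsum_eq_zero_of_not_summable ha
    simp only [Set.indicator_of_notMem ha, this]
    exact tendsto_const_nhds

/-- **Lemma (truncation approximation, infinite sums).**
For independent random variables `X 0, X 1, …` whose sum `S = Σ_i X i` converges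
almost surely, with `1 - η > ε > 0` and `x > 0`, the truncated sum
`S^{(εx)} = Σ_i X i 1{X i < εx}` also converges almost surely and the truncation
approximation inequality holds. -/
theorem truncation_approximation_infinite
    {Ω : Type*} [MeasurableSpace Ω] (P : Measure Ω) [IsProbabilityMeasure P]
    (X : ℕ → Ω → ℝ)
    (hmeas : ∀ i, Measurable (X i))
    (hindep : iIndepFun X P)
    (hsum : ∀ᵐ ω ∂P, Summable (fun i => X i ω))
    (x η ε : ℝ) (hx : 0 < x)
    (hη0 : 0 < η) (hη1 : η < 1) (hε : 0 < ε) (hηε : ε < 1 - η) :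
    (∀ᵐ ω ∂P, Summable (fun i => if X i ω < ε * x then X i ω else 0)) ∧
    |(P {ω | x ≤ ∑' i, X i ω}).toReal
      - (P {ω | x ≤ ∑' i, (if X i ω < ε * x then X i ω else 0)}).toReal
      - ∑' j, (P {ω | (1 - η) * x ≤ X j ω}).toReal|
    ≤ 4 * (∑' j, (P {ω | ε * x ≤ X j ω}).toReal) ^ 2
      + 3 * ∑' j, (P {ω | ε * x ≤ X j ω}).toReal
          * (P {ω | η * x < |(∑' i, X i ω) - X j ω|}).toReal
      + ∑' j, (P {ω | (1 - η) * x ≤ X j ω ∧ X j ω < (1 + η) * x}).toReal := by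
  classical
  have hεx : 0 < ε * x := by positivity
  have hηx : 0 < η * x := by positivity
  -- basic objects
  set S : Ω → ℝ := fun ω => ∑' i, X i ω with hSdef
  set Y : ℕ → Ω → ℝ := fun i ω => if X i ω < ε * x then X i ω else 0 with hYdef
  set S' : Ω → ℝ := fun ω => ∑' i, Y i ω with hS'def
  have hYmeas : ∀ i, Measurable (Y i) := fun i =>
    Measurable.ite (measurableSet_lt (hmeas i) measurable_const) (hmeas i) measurable_const
  have hSmeas : Measurable S := measurable_tsum_real X hmeas
  have hS'meas : Measurable S' := measurable_tsum_real Y hYmeas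
  set A : ℕ → Set Ω := fun j => {ω | ε * x ≤ X j ω} with hAdef
  have hAmeas : ∀ j, MeasurableSet (A j) := fun j => measurableSet_le measurable_const (hmeas j)
  -- a.e. eventual smallness
  have htend : ∀ᵐ ω ∂P, Tendsto (fun i => X i ω) atTop (nhds 0) := by
    filter_upwards [hsum] with ω hω using hω.tendsto_atTop_zero
  have hfin : ∀ᵐ ω ∂P, {i | ¬ X i ω < ε * x}.Finite := by
    filter_upwards [htend] with ω hω
    have : ∀ᶠ i in atTop, X i ω < ε * x := hω.eventually_lt_const hεx
    rw [← Nat.cofinite_eq_atTop, eventually_cofinite] at this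
    exact this
  -- first conjunct
  have hconj1 : ∀ᵐ ω ∂P, Summable (fun i => Y i ω) := by
    filter_upwards [hsum, hfin] with ω hω hfω
    have heq : (fun i => Y i ω)
        = fun i => X i ω - Set.indicator {i | ¬ X i ω < ε * x} (fun i => X i ω) i := by
      funext i
      show (if X i ω < ε * x then X i ω else 0) = _
      by_cases h : X i ω < ε * x
      · rw [if_pos h, Set.indicator_of_notMem (by simp [h]), sub_zero]
      · have hmem : ({i | ¬ X i ω < ε * x}).indicator (fun i => X i ω) i = X i ω :=
          Set.indicator_of_mem (show i ∈ {i | ¬ X i ω < ε * x} from h) _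
        rw [if_neg h, hmem, sub_self]
    rw [heq]
    exact hω.sub (summable_of_finite_support (hfω.subset (Set.support_indicator_subset (f := fun i => X i ω) (s := {i | ¬ X i ω < ε * x}))))
  refine ⟨hconj1, ?_⟩
  -- summability of exceedance probabilities (second Borel-Cantelli)
  have hAindep : iIndepSet A P := by
    rw [iIndepSet_iff_meas_biInter (fun j => hAmeas j)]
    intro s
    exact hindep.measure_inter_preimage_eq_mul s
      (sets := fun _ => Set.Ici (ε * x)) (fun i _ => measurableSet_Ici)
  have hsum_p : ∑' j, P (A j) ≠ ∞ := by
    intro h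
    have hone := ProbabilityTheory.measure_limsup_eq_one (fun j => hAmeas j) hAindep h
    have hzero : P (limsup A atTop) = 0 := by
      rw [measure_eq_zero_iff_ae_notMem]
      filter_upwards [htend] with ω hω
      intro hmem
      rw [Filter.mem_limsup_iff_frequently_mem] at hmem
      have hev : ∀ᶠ i in atTop, X i ω < ε * x := hω.eventually_lt_const hεx
      obtain ⟨i, hi1, hi2⟩ := (hmem.and_eventually hev).exists
      exact absurd (show ε * x ≤ X i ω from hi1) (not_le.2 hi2)
    rw [hone] at hzero
    exact one_ne_zero hzero
  -- real-valued quantities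
  set p : ℕ → ℝ := fun j => (P (A j)).toReal with hpdef
  have hp_sum : Summable p := ENNReal.summable_toReal hsum_p
  have hp_nonneg : ∀ j, 0 ≤ p j := fun j => ENNReal.toReal_nonneg
  have hps : ∑' j, p j = (∑' j, P (A j)).toReal :=
    (ENNReal.tsum_toReal_eq (fun j => measure_ne_top P _)).symm
  -- the events
  set C1 : Set Ω := {ω | x ≤ S ω} with hC1def
  set C2 : Set Ω := {ω | x ≤ S' ω} with hC2def
  set Q : ℕ → Set Ω := fun j => {ω | (1 - η) * x ≤ X j ω} with hQdef
  set D : ℕ → Set Ω := fun j => {ω | η * x < |S ω - X j ω|} with hDdef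
  set R : ℕ → Set Ω := fun j => {ω | (1 - η) * x ≤ X j ω ∧ X j ω < (1 + η) * x} with hRdef
  set E0 : Set Ω := {ω | ∀ k, X k ω < ε * x} with hE0def
  set B : ℕ → Set Ω := fun j => A j ∩ {ω | ∀ k, k ≠ j → X k ω < ε * x} with hBdef
  set E2 : Set Ω := ⋃ j, ⋃ k, ⋃ (_ : j ≠ k), (A j ∩ A k) with hE2def
  have hC1meas : MeasurableSet C1 := measurableSet_le measurable_const hSmeas
  have hC2meas : MeasurableSet C2 := measurableSet_le measurable_const hS'meas
  have hE0meas : MeasurableSet E0 := by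
    have : E0 = ⋂ k, {ω | X k ω < ε * x} := by ext ω; simp [hE0def]
    rw [this]
    exact MeasurableSet.iInter fun k => measurableSet_lt (hmeas k) measurable_const
  have hBmeas : ∀ j, MeasurableSet (B j) := by
    intro j
    refine (hAmeas j).inter ?_
    have : {ω | ∀ k, k ≠ j → X k ω < ε * x} = ⋂ k, {ω | k ≠ j → X k ω < ε * x} := by
      ext ω; simp
    rw [this]
    refine MeasurableSet.iInter fun k => ?_
    by_cases h : k = j
    · simp [h]
    · simp only [h, ne_eq, not_false_eq_true, forall_true_left]
      exact measurableSet_lt (hmeas k) measurable_const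
  have hE2meas : MeasurableSet E2 :=
    MeasurableSet.iUnion fun j => MeasurableSet.iUnion fun k => MeasurableSet.iUnion fun _ =>
      (hAmeas j).inter (hAmeas k)
  -- decomposition of a measurable set
  have hBdisj : Pairwise (Function.onFun Disjoint B) := by
    intro j k hjk
    refine Set.disjoint_left.2 fun ω hωj hωk => ?_
    exact absurd (show ε * x ≤ X j ω from hωj.1) (not_le.2 (hωk.2 j hjk))
  have hBE2 : ∀ j, Disjoint (B j) E2 := by
    intro j
    refine Set.disjoint_left.2 fun ω hωj hωk => ?_
    simp only [hE2def, Set.mem_iUnion] at hωk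
    obtain ⟨c, k, hck, hc, hk⟩ := hωk
    rcases ne_or_eq c j with h | h
    · exact absurd (show ε * x ≤ X c ω from hc) (not_le.2 (hωj.2 c h))
    · have hkj : k ≠ j := by rw [h] at hck; exact hck.symm
      exact absurd (show ε * x ≤ X k ω from hk) (not_le.2 (hωj.2 k hkj))
  have hdecomp : ∀ C : Set Ω, MeasurableSet C →
      P C = P (C ∩ E0) + ((∑' j, P (C ∩ B j)) + P (C ∩ E2)) := by
    intro C hC
    have hstep1 : P C = P (C ∩ E0) + P (C \ E0) := (measure_inter_add_diff C hE0meas).symm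
    have hset : C \ E0 = (⋃ j, C ∩ B j) ∪ (C ∩ E2) := by
      ext ω
      constructor
      · rintro ⟨hωC, hωE0⟩
        obtain ⟨j, hj⟩ := not_forall.1 hωE0
        have hj' : ε * x ≤ X j ω := not_lt.1 hj
        by_cases hex : ∃ k, k ≠ j ∧ ε * x ≤ X k ω
        · obtain ⟨k, hkj, hk⟩ := hex
          refine Or.inr ⟨hωC, ?_⟩
          simp only [hE2def, Set.mem_iUnion]
          exact ⟨j, k, hkj.symm, hj', hk⟩
        · push_neg at hex
          exact Or.inl (Set.mem_iUnion.2 ⟨j, hωC, hj', fun k hk => hex k hk⟩)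
      · rintro (h | h)
        · obtain ⟨j, hωC, hωB⟩ := Set.mem_iUnion.1 h
          exact ⟨hωC, fun hall => absurd (show ε * x ≤ X j ω from hωB.1) (not_le.2 (hall j))⟩
        · refine ⟨h.1, fun hall => ?_⟩
          have := h.2
          simp only [hE2def, Set.mem_iUnion] at this
          obtain ⟨c, k, hck, hc, hk⟩ := this
          exact absurd (show ε * x ≤ X c ω from hc) (not_le.2 (hall c))
    have hdu : Disjoint (⋃ j, C ∩ B j) (C ∩ E2) := by
      refine Set.disjoint_left.2 fun ω hω1 hω2 => ?_
      obtain ⟨j, _, hωB⟩ := Set.mem_iUnion.1 hω1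
      exact (hBE2 j).le_bot ⟨hωB, hω2.2⟩
    rw [hstep1, hset, measure_union hdu (hC.inter hE2meas),
      measure_iUnion (fun j k hjk => ((hBdisj hjk).mono Set.inter_subset_right
        Set.inter_subset_right)) (fun j => hC.inter (hBmeas j))]
  -- equality on E0
  have hE0eq : C1 ∩ E0 = C2 ∩ E0 := by
    have key : ∀ ω, ω ∈ E0 → S' ω = S ω := by
      intro ω hω
      exact tsum_congr fun i => if_pos (hω i)
    ext ω
    simp only [Set.mem_inter_iff, hC1def, hC2def, Set.mem_setOf_eq]
    exact ⟨fun ⟨h1, h2⟩ => ⟨by rw [key ω h2]; exact h1, h2⟩,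
      fun ⟨h1, h2⟩ => ⟨by rw [← key ω h2]; exact h1, h2⟩⟩
  -- independence: pairs
  have hpair : ∀ j k, j ≠ k → P (A j ∩ A k) = P (A j) * P (A k) := by
    intro j k hjk
    exact (hindep.indepFun hjk).measure_inter_preimage_eq_mul
      (Set.Ici (ε * x)) (Set.Ici (ε * x)) measurableSet_Ici measurableSet_Ici
  -- independence: A j and D j
  have hAD : ∀ j, P (A j ∩ D j) = P (A j) * P (D j) := by
    intro j
    have hTmeas : Measurable[⨆ k ∈ ({j}ᶜ : Set ℕ), MeasurableSpace.comap (X k)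
        (inferInstance : MeasurableSpace ℝ)]
        (fun ω => ∑' i, (if i = j then 0 else X i ω)) := by
      refine @measurable_tsum_real Ω (⨆ k ∈ ({j}ᶜ : Set ℕ), MeasurableSpace.comap (X k)
        (inferInstance : MeasurableSpace ℝ)) (fun i ω => if i = j then 0 else X i ω) ?_
      intro i
      by_cases h : i = j
      · simp only [h, if_pos rfl]
        exact @measurable_const ℝ Ω _ _ 0
      · simp only [h, if_neg h]
        exact Measurable.of_comap_le (le_biSup
          (fun k => MeasurableSpace.comap (X k) (inferInstance : MeasurableSpace ℝ))
          (show i ∈ ({j}ᶜ : Set ℕ) from h))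
    have hsig : Indep (⨆ k ∈ ({j} : Set ℕ), MeasurableSpace.comap (X k)
          (inferInstance : MeasurableSpace ℝ))
        (⨆ k ∈ ({j}ᶜ : Set ℕ), MeasurableSpace.comap (X k)
          (inferInstance : MeasurableSpace ℝ)) P :=
      indep_iSup_of_disjoint (fun k => (hmeas k).comap_le) hindep disjoint_compl_right
    have hIndepTj : IndepFun (X j) (fun ω => ∑' i, (if i = j then 0 else X i ω)) P := by
      rw [IndepFun_iff_Indep]
      refine indep_of_indep_of_le_right (indep_of_indep_of_le_left hsig ?_) hTmeas.comap_le
      exact le_biSup (fun k => MeasurableSpace.comap (X k) (inferInstance : MeasurableSpace ℝ))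
        (show j ∈ ({j} : Set ℕ) from rfl)
    have haeT : (fun ω => ∑' i, (if i = j then 0 else X i ω)) =ᵐ[P]
        (fun ω => S ω - X j ω) := by
      filter_upwards [hsum] with ω hω
      have h := Summable.tsum_eq_add_tsum_ite hω j
      show (∑' i, if i = j then 0 else X i ω) = S ω - X j ω
      have hS : S ω = ∑' i, X i ω := rfl
      rw [hS, h]
      ring
    have hIndepSD : IndepFun (X j) (fun ω => S ω - X j ω) P :=
      hIndepTj.congr (Filter.EventuallyEq.refl _ _) haeT
    have hset : MeasurableSet {y : ℝ | η * x < |y|} :=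
      measurableSet_lt measurable_const continuous_abs.measurable
    exact hIndepSD.measure_inter_preimage_eq_mul
      (Set.Ici (ε * x)) {y : ℝ | η * x < |y|} measurableSet_Ici hset
  -- inclusion bounds
  have hB_sub_A : ∀ j, B j ⊆ A j := fun j => Set.inter_subset_left
  have hQ_sub_A : ∀ j, Q j ⊆ A j := by
    intro j ω hω
    have h1 : ε * x ≤ (1 - η) * x := mul_le_mul_of_nonneg_right hηε.le hx.le
    exact le_trans h1 hω
  have hS'B : ∀ j ω, Summable (fun i => X i ω) → ω ∈ B j → S' ω = S ω - X j ω := by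
    intro j ω hω hωB
    have hYeq : ∀ i, Y i ω = if i = j then 0 else X i ω := by
      intro i
      by_cases h : i = j
      · subst h
        rw [if_pos rfl]
        exact if_neg (not_lt.2 hωB.1)
      · rw [if_neg h]
        exact if_pos (hωB.2 i h)
    have h1 : S' ω = ∑' i, (if i = j then 0 else X i ω) := tsum_congr hYeq
    have h2 := Summable.tsum_eq_add_tsum_ite hω j
    have hS : S ω = ∑' i, X i ω := rfl
    rw [h1, hS, h2]
    ring
  have hβ : ∀ j, P (C2 ∩ B j) ≤ P (A j) * P (D j) := by
    intro j
    rw [← hAD j]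
    refine measure_mono_ae ?_
    filter_upwards [hsum] with ω hω
    rintro ⟨hωC2, hωB⟩
    have hxle : x ≤ S' ω := hωC2
    rw [hS'B j ω hω hωB] at hxle
    have hd : η * x < |S ω - X j ω| := by
      have : η * x < x := by nlinarith
      exact lt_of_lt_of_le this (le_trans hxle (le_abs_self _))
    exact ⟨hωB.1, hd⟩
  have hα_le : ∀ j, P (C1 ∩ B j) ≤ P (Q j) + P (A j) * P (D j) := by
    intro j
    rw [← hAD j]
    refine le_trans (measure_mono ?_) (measure_union_le _ _)
    rintro ω ⟨hωC1, hωB⟩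
    by_cases hd : η * x < |S ω - X j ω|
    · exact Or.inr ⟨hωB.1, hd⟩
    · push_neg at hd
      have habs : S ω - X j ω ≤ η * x := le_trans (le_abs_self _) hd
      have hq : (1 - η) * x ≤ X j ω := by
        have hxS : x ≤ S ω := hωC1
        nlinarith
      exact Or.inl hq
  have hq_le : ∀ j, P (Q j) ≤ P (C1 ∩ B j) + (P (R j) + (P (A j) * P (D j)
      + P (A j) * ∑' k, P (A k))) := by
    intro j
    have hsub : Q j ⊆ (C1 ∩ B j) ∪ (R j ∪ ((A j ∩ D j) ∪ (Q j \ B j))) := by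
      intro ω hωQ
      by_cases hB : ω ∈ B j
      · by_cases hC : ω ∈ C1
        · exact Or.inl ⟨hC, hB⟩
        · by_cases hd : η * x < |S ω - X j ω|
          · exact Or.inr (Or.inr (Or.inl ⟨hQ_sub_A j hωQ, hd⟩))
          · push_neg at hd
            have habs : -(η * x) ≤ S ω - X j ω := neg_le_of_abs_le hd
            have hSx : S ω < x := not_le.1 hC
            have hr : X j ω < (1 + η) * x := by nlinarith
            exact Or.inr (Or.inl ⟨hωQ, hr⟩)
      · exact Or.inr (Or.inr (Or.inr ⟨hωQ, hB⟩))
    have hQB : P (Q j \ B j) ≤ P (A j) * ∑' k, P (A k) := by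
      have hsub2 : Q j \ B j ⊆ ⋃ k, ⋃ (_ : k ≠ j), (A j ∩ A k) := by
        rintro ω ⟨hωQ, hωB⟩
        have hA : ω ∈ A j := hQ_sub_A j hωQ
        have : ¬ ∀ k, k ≠ j → X k ω < ε * x := fun hall => hωB ⟨hA, hall⟩
        obtain ⟨k, hk⟩ := not_forall.1 this
        rw [Classical.not_imp] at hk
        exact Set.mem_iUnion.2 ⟨k, Set.mem_iUnion.2 ⟨hk.1, hA, not_lt.1 hk.2⟩⟩
      refine le_trans (measure_mono hsub2) (le_trans (measure_iUnion_le _) ?_)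
      have hterm : ∀ k, P (⋃ (_ : k ≠ j), (A j ∩ A k)) ≤ P (A j) * P (A k) := by
        intro k
        by_cases h : k = j
        · subst h
          simp
        · rw [show (⋃ (_ : k ≠ j), A j ∩ A k) = A j ∩ A k from by simp [h]]
          exact le_of_eq (hpair j k (fun hh => h hh.symm))
      exact le_trans (ENNReal.tsum_le_tsum hterm) (le_of_eq ENNReal.tsum_mul_left)
    calc P (Q j) ≤ P ((C1 ∩ B j) ∪ (R j ∪ ((A j ∩ D j) ∪ (Q j \ B j)))) := measure_mono hsub
    _ ≤ P (C1 ∩ B j) + P (R j ∪ ((A j ∩ D j) ∪ (Q j \ B j))) := measure_union_le _ _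
    _ ≤ P (C1 ∩ B j) + (P (R j) + P ((A j ∩ D j) ∪ (Q j \ B j))) :=
        add_le_add_right (measure_union_le _ _) _
    _ ≤ P (C1 ∩ B j) + (P (R j) + (P (A j ∩ D j) + P (Q j \ B j))) :=
        add_le_add_right (add_le_add_right (measure_union_le _ _) _) _
    _ ≤ P (C1 ∩ B j) + (P (R j) + (P (A j) * P (D j) + P (A j) * ∑' k, P (A k))) := by
        rw [hAD j]
        exact add_le_add_right (add_le_add_right (add_le_add_right hQB _) _) _
  have hE2_le : P E2 ≤ (∑' j, P (A j)) * (∑' j, P (A j)) := by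
    have h1 : P E2 ≤ ∑' j, ∑' k, P (A j) * P (A k) := by
      refine le_trans (measure_iUnion_le _) (ENNReal.tsum_le_tsum fun j =>
        le_trans (measure_iUnion_le _) (ENNReal.tsum_le_tsum fun k => ?_))
      by_cases h : j = k
      · subst h
        simp
      · rw [show (⋃ (_ : j ≠ k), A j ∩ A k) = A j ∩ A k from by simp [h]]
        exact le_of_eq (hpair j k h)
    calc P E2 ≤ ∑' j, ∑' k, P (A j) * P (A k) := h1
    _ = (∑' j, P (A j)) * (∑' j, P (A j)) := by
        simp_rw [ENNReal.tsum_mul_left]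
        rw [ENNReal.tsum_mul_right]
  -- real quantities
  set q : ℕ → ℝ := fun j => (P (Q j)).toReal with hqdef
  set d : ℕ → ℝ := fun j => (P (D j)).toReal with hddef
  set r : ℕ → ℝ := fun j => (P (R j)).toReal with hrdef
  set a : ℕ → ℝ := fun j => (P (C1 ∩ B j)).toReal with hadef
  set b : ℕ → ℝ := fun j => (P (C2 ∩ B j)).toReal with hbdef
  set sp : ℝ := ∑' j, p j with hspdef
  have hfinm : ∀ s : Set Ω, P s ≠ ∞ := fun s => measure_ne_top P s
  have htoReal_mono : ∀ {s t : Set Ω}, s ⊆ t → (P s).toReal ≤ (P t).toReal :=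
    fun h => ENNReal.toReal_mono (hfinm _) (measure_mono h)
  have hq_le_p : ∀ j, q j ≤ p j := fun j => htoReal_mono (hQ_sub_A j)
  have ha_le_p : ∀ j, a j ≤ p j := fun j => htoReal_mono (fun ω h => hB_sub_A j h.2)
  have hb_le_p : ∀ j, b j ≤ p j := fun j => htoReal_mono (fun ω h => hB_sub_A j h.2)
  have hr_le_p : ∀ j, r j ≤ p j := fun j => htoReal_mono (fun ω h => hQ_sub_A j h.1)
  have hd_nonneg : ∀ j, 0 ≤ d j := fun j => ENNReal.toReal_nonneg
  have hd_le_1 : ∀ j, d j ≤ 1 := fun j => by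
    have h := prob_le_one (μ := P) (s := D j)
    calc d j ≤ (1 : ℝ≥0∞).toReal := ENNReal.toReal_mono ENNReal.one_ne_top h
    _ = 1 := by simp
  have hsp_nonneg : 0 ≤ sp := tsum_nonneg hp_nonneg
  have hsa : Summable a :=
    Summable.of_nonneg_of_le (fun j => ENNReal.toReal_nonneg) ha_le_p hp_sum
  have hsb : Summable b :=
    Summable.of_nonneg_of_le (fun j => ENNReal.toReal_nonneg) hb_le_p hp_sum
  have hsq : Summable q :=
    Summable.of_nonneg_of_le (fun j => ENNReal.toReal_nonneg) hq_le_p hp_sum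
  have hsr : Summable r :=
    Summable.of_nonneg_of_le (fun j => ENNReal.toReal_nonneg) hr_le_p hp_sum
  have hspd : Summable (fun j => p j * d j) :=
    Summable.of_nonneg_of_le (fun j => mul_nonneg (hp_nonneg j) (hd_nonneg j))
      (fun j => mul_le_of_le_one_right (hp_nonneg j) (hd_le_1 j)) hp_sum
  have hspd_nonneg : 0 ≤ ∑' j, p j * d j :=
    tsum_nonneg fun j => mul_nonneg (hp_nonneg j) (hd_nonneg j)
  have hsr_nonneg : 0 ≤ ∑' j, r j := tsum_nonneg fun j => ENNReal.toReal_nonneg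
  -- real decomposition
  have hPtsum : ∀ C : Set Ω, MeasurableSet C → (P C).toReal
      = (P (C ∩ E0)).toReal + ((∑' j, (P (C ∩ B j)).toReal) + (P (C ∩ E2)).toReal) := by
    intro C hC
    have h1 : ∑' j, P (C ∩ B j) ≠ ∞ :=
      (lt_of_le_of_lt (ENNReal.tsum_le_tsum fun j =>
        measure_mono fun ω h => hB_sub_A j h.2) hsum_p.lt_top).ne
    rw [hdecomp C hC, ENNReal.toReal_add (hfinm _) (ENNReal.add_ne_top.2 ⟨h1, hfinm _⟩),
      ENNReal.toReal_add h1 (hfinm _), ENNReal.tsum_toReal_eq (fun j => hfinm _)]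
  set u : ℝ := (P (C1 ∩ E2)).toReal with hudef
  set v : ℝ := (P (C2 ∩ E2)).toReal with hvdef
  have key : (P C1).toReal - (P C2).toReal - ∑' j, q j
      = (∑' j, (a j - b j - q j)) + (u - v) := by
    have hts : ∑' j, (a j - b j - q j) = (∑' j, a j) - (∑' j, b j) - (∑' j, q j) := by
      rw [Summable.tsum_sub (hsa.sub hsb) hsq, Summable.tsum_sub hsa hsb]
    rw [hPtsum C1 hC1meas, hPtsum C2 hC2meas, hE0eq, hts]
    ring
  -- per-term real bounds
  have hb' : ∀ j, b j ≤ p j * d j := by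
    intro j
    calc b j ≤ (P (A j) * P (D j)).toReal :=
      ENNReal.toReal_mono (ENNReal.mul_ne_top (hfinm _) (hfinm _)) (hβ j)
    _ = p j * d j := ENNReal.toReal_mul
  have ha' : ∀ j, a j ≤ q j + p j * d j := by
    intro j
    have hne : P (A j) * P (D j) ≠ ∞ := ENNReal.mul_ne_top (hfinm _) (hfinm _)
    calc a j ≤ (P (Q j) + P (A j) * P (D j)).toReal :=
      ENNReal.toReal_mono (ENNReal.add_ne_top.2 ⟨hfinm _, hne⟩) (hα_le j)
    _ = q j + p j * d j := by rw [ENNReal.toReal_add (hfinm _) hne, ENNReal.toReal_mul]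
  have hq' : ∀ j, q j ≤ a j + (r j + (p j * d j + p j * sp)) := by
    intro j
    have hne1 : P (A j) * P (D j) ≠ ∞ := ENNReal.mul_ne_top (hfinm _) (hfinm _)
    have hne2 : P (A j) * ∑' k, P (A k) ≠ ∞ := ENNReal.mul_ne_top (hfinm _) hsum_p
    have hne3 : P (A j) * P (D j) + P (A j) * ∑' k, P (A k) ≠ ∞ :=
      ENNReal.add_ne_top.2 ⟨hne1, hne2⟩
    have hne4 : P (R j) + (P (A j) * P (D j) + P (A j) * ∑' k, P (A k)) ≠ ∞ :=
      ENNReal.add_ne_top.2 ⟨hfinm _, hne3⟩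
    calc q j ≤ (P (C1 ∩ B j) + (P (R j) + (P (A j) * P (D j)
        + P (A j) * ∑' k, P (A k)))).toReal :=
      ENNReal.toReal_mono (ENNReal.add_ne_top.2 ⟨hfinm _, hne4⟩) (hq_le j)
    _ = a j + (r j + (p j * d j + p j * sp)) := by
      rw [ENNReal.toReal_add (hfinm _) hne4, ENNReal.toReal_add (hfinm _) hne3,
        ENNReal.toReal_add hne1 hne2, ENNReal.toReal_mul, ENNReal.toReal_mul, ← hps]
  have habq : ∀ j, |a j - b j - q j| ≤ 2 * (p j * d j) + r j + p j * sp := by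
    intro j
    have h1 := hb' j
    have h2 := ha' j
    have h3 := hq' j
    have hbnn : 0 ≤ b j := ENNReal.toReal_nonneg
    have hrnn : 0 ≤ r j := ENNReal.toReal_nonneg
    have hpdnn : 0 ≤ p j * d j := mul_nonneg (hp_nonneg j) (hd_nonneg j)
    have hpsnn : 0 ≤ p j * sp := mul_nonneg (hp_nonneg j) hsp_nonneg
    rw [abs_le]
    constructor <;> [skip; skip] <;> linarith
  have habs_summable : Summable (fun j => |a j - b j - q j|) :=
    Summable.of_nonneg_of_le (fun j => abs_nonneg _) habq
      (((hspd.mul_left 2).add hsr).add (hp_sum.mul_right sp))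
  have hE2r : (P E2).toReal ≤ sp * sp := by
    calc (P E2).toReal ≤ ((∑' j, P (A j)) * (∑' j, P (A j))).toReal :=
      ENNReal.toReal_mono (ENNReal.mul_ne_top hsum_p hsum_p) hE2_le
    _ = sp * sp := by rw [ENNReal.toReal_mul, ← hps]
  have hu : u ≤ sp * sp := le_trans (htoReal_mono Set.inter_subset_right) hE2r
  have hv : v ≤ sp * sp := le_trans (htoReal_mono Set.inter_subset_right) hE2r
  have hunn : 0 ≤ u := ENNReal.toReal_nonneg
  have hvnn : 0 ≤ v := ENNReal.toReal_nonneg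
  have huv : |u - v| ≤ sp * sp := abs_le.2 ⟨by linarith, by linarith⟩
  have hsum_bound : ∑' j, |a j - b j - q j|
      ≤ 2 * (∑' j, p j * d j) + (∑' j, r j) + sp * sp := by
    calc ∑' j, |a j - b j - q j| ≤ ∑' j, (2 * (p j * d j) + r j + p j * sp) :=
      Summable.tsum_le_tsum habq habs_summable (((hspd.mul_left 2).add hsr).add (hp_sum.mul_right sp))
    _ = 2 * (∑' j, p j * d j) + (∑' j, r j) + sp * sp := by
      rw [Summable.tsum_add ((hspd.mul_left 2).add hsr) (hp_sum.mul_right sp),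
        Summable.tsum_add (hspd.mul_left 2) hsr, tsum_mul_left, tsum_mul_right]
  have hfinal : |(P C1).toReal - (P C2).toReal - ∑' j, q j|
      ≤ 4 * sp ^ 2 + 3 * (∑' j, p j * d j) + ∑' j, r j := by
    rw [key]
    have habs1 : |∑' j, (a j - b j - q j)| ≤ ∑' j, |a j - b j - q j| := by
      have := norm_tsum_le_tsum_norm (f := fun j => a j - b j - q j)
        (by simpa [Real.norm_eq_abs] using habs_summable)
      simpa [Real.norm_eq_abs] using this
    calc |(∑' j, (a j - b j - q j)) + (u - v)|
        ≤ |∑' j, (a j - b j - q j)| + |u - v| := abs_add_le _ _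
    _ ≤ (2 * (∑' j, p j * d j) + (∑' j, r j) + sp * sp) + sp * sp := by
        have := le_trans habs1 hsum_bound
        linarith
    _ ≤ 4 * sp ^ 2 + 3 * (∑' j, p j * d j) + ∑' j, r j := by nlinarith [sq_nonneg sp]
  exact hfinal
end
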